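/- Suppose ω > 0 and the purely imaginary number iω satisfies -ω² + (μ + a)iω + aμ(1 - (Nβλ/(dμ))e^{-iωτ}) = 0, with τ ≥ 0 and all parameters positive. Then ω⁴ + (a² + μ²)ω² + a²μ²(1 - (Nβλ/(dμ))²) = 0. -/
import Mathlib


theorem imaginary_root_implies (a mu d beta lam N tau omega : ℝ)
    (ha : 0 < a) (hmu : 0 < mu) (hd : 0 < d) (hbeta : 0 < beta)
    (hlam : 0 < lam) (hN : 0 < N) (htau : 0 ≤ tau) (homega : 0 < omega)
    (heq : -(↑omega : ℂ) ^ 2 + (↑(mu + a) : ℂ) * (Complex.I * ↑omega) +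
      (↑(a * mu) : ℂ) * (1 - (↑(N * beta * lam / (d * mu)) : ℂ) *
        Complex.exp (-(Complex.I * ↑omega) * ↑tau)) = 0) :
    omega ^ 4 + (a ^ 2 + mu ^ 2) * omega ^ 2 +
      a ^ 2 * mu ^ 2 * (1 - (N * beta * lam / (d * mu)) ^ 2) = 0 := by
  set R := N * beta * lam / (d * mu) with hR
  have h1 : (-(Complex.I * ↑omega) * ↑tau) = (↑(-(omega * tau)) : ℂ) * Complex.I := by
    push_cast; ring
  rw [h1, Complex.exp_mul_I] at heq
  have hre := congrArg Complex.re heq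
  have him := congrArg Complex.im heq
  simp [Complex.add_re, Complex.add_im, Complex.mul_re, Complex.mul_im,
    Complex.ofReal_re, Complex.ofReal_im, Complex.I_re, Complex.I_im,
    Complex.cos_ofReal_re, Complex.sin_ofReal_re, Complex.cos_ofReal_im, Complex.sin_ofReal_im, ← Complex.ofReal_mul, ← Complex.ofReal_pow] at hre him
  have hsc : Real.sin (omega * tau) ^ 2 + Real.cos (omega * tau) ^ 2 = 1 :=
    Real.sin_sq_add_cos_sq _
  have hc : a * mu * R * Real.cos (omega * tau) = a * mu - omega ^ 2 := by nlinarith [hre]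
  have hs : a * mu * R * Real.sin (omega * tau) = -((mu + a) * omega) := by nlinarith [him]
  nlinarith [congrArg (· ^ 2) hc, congrArg (· ^ 2) hs, hsc, sq_nonneg (a * mu * R)]
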